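/- Let C_n be a vertex-weighted oriented n-cycle with vertices x_1,...,x_n, edges oriented cyclically, and weight function w with w_i = w(x_i) ≥ 2 for all i. Let L_i = x_{i−1} x_i^{w_i} (indices mod n) be the minimal generators of the edge ideal I(C_n). Then every monomial M in the minimal generating set of I(C_n)^t has a unique expression M = L_{i_1}^{a_{i_1}} ··· L_{i_ℓ}^{a_{i_ℓ}} with 1 ≤ i_1 < ··· < i_ℓ ≤ n, all a_{i_p} > 0, and a_{i_1} + ··· + a_{i_ℓ} = t. -/

import Mathlib

open MvPolynomial

noncomputable section

namespace PaperReg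

variable (k : Type) [Field k] (σ : Type)

/-- A graded free resolution of a homogeneous ideal `I` of `MvPolynomial σ k`:
finite-rank free modules `Fin (rk i) →₀ S` with basis elements of degrees `deg i`,
degree-preserving differentials, exact, augmented onto `I`. -/
structure GradedFreeRes (I : Ideal (MvPolynomial σ k)) where
  rk : ℕ → ℕ
  deg : (i : ℕ) → Fin (rk i) → ℕ
  aug : (Fin (rk 0) →₀ MvPolynomial σ k) →ₗ[MvPolynomial σ k] MvPolynomial σ k
  d : (i : ℕ) →
    ((Fin (rk (i + 1)) →₀ MvPolynomial σ k) →ₗ[MvPolynomial σ k] (Fin (rk i) →₀ MvPolynomial σ k))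
  aug_range : LinearMap.range aug = I
  exact_zero : LinearMap.range (d 0) = LinearMap.ker aug
  exact_succ : ∀ i, LinearMap.range (d (i + 1)) = LinearMap.ker (d i)
  aug_graded : ∀ b, (aug (Finsupp.single b 1)).IsHomogeneous (deg 0 b)
  d_graded : ∀ i b c, (d i (Finsupp.single b 1)) c = 0 ∨
    ∃ m, deg (i + 1) b = deg i c + m ∧ ((d i (Finsupp.single b 1)) c).IsHomogeneous m

/-- The `(i,j)`-th graded Betti number of `I`: the minimal number of degree-`j` basis
elements in homological position `i`, over all graded free resolutions of `I`
(achieved by the minimal graded free resolution). -/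
def betti (I : Ideal (MvPolynomial σ k)) (i j : ℕ) : ℕ :=
  sInf { r | ∃ F : GradedFreeRes k σ I,
    r = (Finset.univ.filter (fun b => F.deg i b = j)).card }

/-- Castelnuovo–Mumford regularity: `reg I = max { j - i | betti I i j ≠ 0 }`. -/
def reg (I : Ideal (MvPolynomial σ k)) : ℕ :=
  sSup { r | ∃ i j : ℕ, betti k σ I i j ≠ 0 ∧ r = j - i }

/-- The monic monomial with exponent vector `a`. -/
def mon (a : σ →₀ ℕ) : MvPolynomial σ k := monomial a 1

/-- `I` is a monomial ideal. -/
def IsMonomialIdeal (I : Ideal (MvPolynomial σ k)) : Prop :=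
  ∃ A : Set (σ →₀ ℕ), I = Ideal.span (mon k σ '' A)

/-- The exponent vectors of the unique minimal set of monomial generators of a
monomial ideal: monomials of `I` minimal with respect to divisibility. -/
def minGens (I : Ideal (MvPolynomial σ k)) : Set (σ →₀ ℕ) :=
  { a | mon k σ a ∈ I ∧ ∀ b : σ →₀ ℕ, mon k σ b ∈ I → b ≤ a → b = a }

/-- The support of a monomial ideal: variables appearing in its minimal generators. -/
def isupp (I : Ideal (MvPolynomial σ k)) : Set σ :=
  ⋃ a ∈ minGens k σ I, ↑a.support

variable (n : ℕ) [NeZero n]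

/-- The exponent vector of the `i`-th generator `L_i = x_{i-1} x_i ^ (w i)` of the
edge ideal of the vertex-weighted oriented `n`-cycle (indices mod `n`). -/
def cycE (w : Fin n → ℕ) (i : Fin n) : Fin n →₀ ℕ :=
  Finsupp.single (i - 1) 1 + Finsupp.single i (w i)

/-- The generator `L_i = x_{i-1} x_i ^ (w i)`. -/
def cycL (w : Fin n → ℕ) (i : Fin n) : MvPolynomial (Fin n) k :=
  monomial (cycE n w i) (1 : k)

/-- The edge ideal of the vertex-weighted oriented `n`-cycle with weights `w`. -/
def cycIdeal (w : Fin n → ℕ) : Ideal (MvPolynomial (Fin n) k) :=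
  Ideal.span (Set.range (cycL k n w))
/-- Exponent vectors of products of `t` generators. -/
def cycA (w : Fin n → ℕ) (t : ℕ) : Set (Fin n →₀ ℕ) :=
  { b | ∃ c : Fin n → ℕ, (∑ i, c i = t) ∧ b = ∑ i, c i • cycE n w i }

lemma sum_smul_ite (w : Fin n → ℕ) (c : Fin n → ℕ) (i : Fin n) :
    (∑ x, (c x + (if x = i then 1 else 0)) • cycE n w x)
      = (∑ x, c x • cycE n w x) + cycE n w i := by
  simp only [add_smul, Finset.sum_add_distrib, ite_smul, one_smul, zero_smul]
  rw [Finset.sum_ite_eq' Finset.univ i (cycE n w)]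
  simp

lemma cycA_succ (w : Fin n → ℕ) (t : ℕ) :
    cycA n w (t + 1) = { b | ∃ b1 ∈ cycA n w t, ∃ i, b = b1 + cycE n w i } := by
  ext b
  constructor
  · rintro ⟨c, hc, rfl⟩
    have hne : ∃ i, c i ≠ 0 := by
      by_contra h
      push_neg at h
      simp [h] at hc
    obtain ⟨i, hi⟩ := hne
    refine ⟨∑ x, (c x - (if x = i then 1 else 0)) • cycE n w x,
      ⟨fun x => c x - (if x = i then 1 else 0), ?_, by simp only⟩, i, ?_⟩
    · show (∑ x, (c x - if x = i then 1 else 0)) = t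
      have h2 : ∑ x : Fin n, (if x = i then 1 else 0) = 1 := by simp
      have h3 : (∑ x, (c x - if x = i then 1 else 0))
          + ∑ x : Fin n, (if x = i then 1 else 0) = ∑ x, c x := by
        rw [← Finset.sum_add_distrib]
        refine Finset.sum_congr rfl fun x _ => ?_
        rcases eq_or_ne x i with rfl | hne
        · simp; omega
        · simp [hne]
      omega
    · rw [← sum_smul_ite]
      congr 1
      funext x
      congr 1
      rcases eq_or_ne x i with rfl | hxi
      · simp; omega
      · simp [hxi]
  · rintro ⟨b1, ⟨c, hc, rfl⟩, i, rfl⟩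
    refine ⟨fun x => c x + (if x = i then 1 else 0), ?_, (sum_smul_ite n w c i).symm⟩
    rw [Finset.sum_add_distrib, hc]
    simp

lemma cycIdeal_pow (w : Fin n → ℕ) (t : ℕ) :
    (cycIdeal k n w) ^ t = Ideal.span ((fun s => monomial s (1 : k)) '' cycA n w t) := by
  induction t with
  | zero =>
    have hA : cycA n w 0 = {0} := by
      ext b
      constructor
      · rintro ⟨c, hc, rfl⟩
        have : ∀ i ∈ Finset.univ, c i = 0 := by
          rw [← Finset.sum_eq_zero_iff]; exact hc
        simp only [Set.mem_singleton_iff]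
        refine Finset.sum_eq_zero fun i _ => by rw [this i (Finset.mem_univ i)]; simp
      · rintro rfl
        exact ⟨fun _ => 0, by simp, by simp⟩
    rw [pow_zero, hA]
    simp [Ideal.one_eq_top, Ideal.span_singleton_one]
  | succ t ih =>
    have hI : cycIdeal k n w
        = Ideal.span ((fun s => monomial s (1 : k)) '' Set.range (cycE n w)) := by
      rw [cycIdeal, ← Set.range_comp]
      rfl
    rw [pow_succ, ih, hI, Ideal.span_mul_span']
    congr 1
    ext p
    constructor
    · rintro ⟨_, ⟨b1, hb1, rfl⟩, _, ⟨_, ⟨i, rfl⟩, rfl⟩, rfl⟩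
      refine ⟨b1 + cycE n w i, ?_, by simp [monomial_mul]⟩
      rw [cycA_succ]
      exact ⟨b1, hb1, i, rfl⟩
    · rintro ⟨b, hb, rfl⟩
      rw [cycA_succ] at hb
      obtain ⟨b1, hb1, i, rfl⟩ := hb
      exact ⟨monomial b1 1, ⟨b1, hb1, rfl⟩, monomial (cycE n w i) 1,
        ⟨cycE n w i, ⟨i, rfl⟩, rfl⟩, by simp [monomial_mul]⟩

lemma coord_eq (hn : 3 ≤ n) (w : Fin n → ℕ) (c : Fin n → ℕ) (j : Fin n) :
    (∑ i, c i • cycE n w i) j = c (j + 1) + w j * c j := by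
  have h1 : NeZero n := inferInstance
  rw [Finsupp.finset_sum_apply]
  simp only [Finsupp.smul_apply, cycE, Finsupp.add_apply, Finsupp.single_apply, smul_eq_mul,
    Nat.mul_add]
  rw [Finset.sum_add_distrib]
  congr 1
  · have : ∀ i : Fin n, (c i * if i - 1 = j then 1 else 0) = if i = j + 1 then c i else 0 := by
      intro i
      have : (i - 1 = j) ↔ (i = j + 1) := sub_eq_iff_eq_add
      rcases eq_or_ne i (j + 1) with rfl | hne
      · simp [this]
      · simp [hne, this]
    rw [Finset.sum_congr rfl fun i _ => this i, Finset.sum_ite_eq' Finset.univ (j + 1) c]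
    simp
  · have : ∀ i : Fin n, (c i * if i = j then w i else 0) = if i = j then w j * c j else 0 := by
      intro i
      rcases eq_or_ne i j with rfl | hne
      · simp [Nat.mul_comm]
      · simp [hne]
    rw [Finset.sum_congr rfl fun i _ => this i, Finset.sum_ite_eq' Finset.univ j
      (fun _ => w j * c j)]
    simp

open Fin.NatCast in
lemma coeffs_unique (hn : 3 ≤ n) (w : Fin n → ℕ) (hw : ∀ i, 2 ≤ w i) (c c' : Fin n → ℕ)
    (h : ∀ j, c (j + 1) + w j * c j = c' (j + 1) + w j * c' j) : c = c' := by
  set u : Fin n → ℕ := fun j => Nat.dist (c j) (c' j) with hu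
  have step : ∀ j, u (j + 1) = w j * u j := by
    intro j
    have h1 : Nat.dist (c (j + 1)) (c' (j + 1)) = Nat.dist (w j * c j) (w j * c' j) := by
      have := h j
      simp only [Nat.dist]
      omega
    rw [hu]
    simp only
    rw [h1, Nat.dist_mul_left]
  have growth : ∀ m : ℕ, ∀ j : Fin n, 2 ^ m * u j ≤ u (j + (m : Fin n)) := by
    intro m
    induction m with
    | zero => intro j; simp
    | succ m ih =>
      intro j
      have hcast : ((m + 1 : ℕ) : Fin n) = (m : Fin n) + 1 := by push_cast; ring
      rw [hcast, ← add_assoc, step (j + (m : Fin n))]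
      calc 2 ^ (m + 1) * u j = 2 * (2 ^ m * u j) := by ring
        _ ≤ 2 * u (j + (m : Fin n)) := by
            exact Nat.mul_le_mul_left 2 (ih j)
        _ ≤ w (j + (m : Fin n)) * u (j + (m : Fin n)) :=
            Nat.mul_le_mul_right _ (hw _)
  have hzero : ∀ j, u j = 0 := by
    intro j
    have := growth n j
    rw [Fin.natCast_self, add_zero] at this
    by_contra hne
    have h1 : 1 ≤ u j := Nat.one_le_iff_ne_zero.mpr hne
    have h2 : 2 ^ n ≤ 1 := by
      have := Nat.le_of_mul_le_mul_right (by omega : 2 ^ n * u j ≤ 1 * u j) (by omega)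
      exact this
    have := Nat.one_lt_two_pow_iff.mpr (by omega : n ≠ 0)
    omega
  funext j
  have := hzero j
  simp only [hu, Nat.dist] at this
  omega

/-- every minimal monomial generator of `I(C_n)^t` is uniquely a
product `L_{i_1}^{a_{i_1}} ··· L_{i_ℓ}^{a_{i_ℓ}}` of the generators
`L_i = x_{i-1} x_i^{w_i}` of the edge ideal of the weighted oriented `n`-cycle,
with exponents summing to `t`.  (Equivalently: there is a unique exponent vector
`c : Fin n → ℕ` with `∑ c = t` realizing the generator.) -/
theorem unique_factorization_cycle_power_gens
    (hn : 3 ≤ n) (w : Fin n → ℕ) (hw : ∀ i, 2 ≤ w i) (t : ℕ) (ht : 1 ≤ t)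
    (a : Fin n →₀ ℕ) (ha : a ∈ minGens k (Fin n) ((cycIdeal k n w) ^ t)) :
    ∃! c : Fin n → ℕ, (∑ i, c i = t) ∧ (a : Fin n →₀ ℕ) = ∑ i, c i • cycE n w i := by
  classical
  obtain ⟨hmem, hmin⟩ := ha
  -- existence
  have hsupp : (mon k (Fin n) a).support = {a} := by
    rw [mon, support_monomial]
    simp
  have h1 : ∃ b ∈ cycA n w t, b ≤ a := by
    have := hmem
    rw [cycIdeal_pow k n w t] at this
    have := (mem_ideal_span_monomial_image (x := mon k (Fin n) a)
      (s := cycA n w t)).mp this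
    rw [hsupp] at this
    exact this a (Finset.mem_singleton_self a)
  obtain ⟨b, hbA, hba⟩ := h1
  have hbI : mon k (Fin n) b ∈ (cycIdeal k n w) ^ t := by
    rw [cycIdeal_pow k n w t]
    refine (mem_ideal_span_monomial_image (x := mon k (Fin n) b)
      (s := cycA n w t)).mpr ?_
    have hsb : (mon k (Fin n) b).support = {b} := by
      rw [mon, support_monomial]; simp
    rw [hsb]
    intro xi hxi
    rw [Finset.mem_singleton] at hxi
    exact ⟨b, hbA, le_of_eq hxi.symm⟩
  have hba' : b = a := hmin b hbI hba
  obtain ⟨c, hc, hbc⟩ := hbA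
  refine ⟨c, ⟨hc, by rw [← hba', hbc]⟩, ?_⟩
  rintro c' ⟨hc', hac'⟩
  refine coeffs_unique n hn w hw c' c fun j => ?_
  have h1 := coord_eq n hn w c' j
  have h2 := coord_eq n hn w c j
  rw [← hac'] at h1
  rw [← hbc, hba'] at h2
  omega

end PaperReg
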